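/- An n-dimensional complex Zinbiel algebra A is generated as an algebra by a single element if and only if A is isomorphic to NF_n. -/

import Mathlib

/-- A complex Zinbiel algebra structure on the module `A`: a bilinear
multiplication satisfying `(x∘y)∘z = x∘(y∘z) + x∘(z∘y)`. -/
structure ZinbielStr (A : Type*) [AddCommGroup A] [Module ℂ A] where
  mul : A →ₗ[ℂ] A →ₗ[ℂ] A
  zinbiel : ∀ x y z : A, mul (mul x y) z = mul x (mul y z) + mul x (mul z y)

namespace ZinbielStr

variable {A : Type*} [AddCommGroup A] [Module ℂ A]

/-- `M.lcs k` is the term `A^k` of the lower central series for `k ≥ 1`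
(`A^1 = A`, `A^{k+1} = span (A ∘ A^k)`), with the convention `M.lcs 0 = ⊤`. -/
def lcs (M : ZinbielStr A) : ℕ → Submodule ℂ A
  | 0 => ⊤
  | 1 => ⊤
  | k + 2 => Submodule.span ℂ {z | ∃ a b, b ∈ lcs M (k + 1) ∧ z = M.mul a b}

/-- A Zinbiel algebra is nilpotent when some term of the lower central series vanishes. -/
def IsNilpotent (M : ZinbielStr A) : Prop := ∃ s, 1 ≤ s ∧ M.lcs s = ⊥

/-- iterated left powers: `pw x k = x ∘ (x ∘ (⋯ ∘ x))` with `k+1` copies of `x`. -/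
def pw (M : ZinbielStr A) (x : A) : ℕ → A
  | 0 => x
  | k + 1 => M.mul x (M.pw x k)

lemma mul_pw (M : ZinbielStr A) (x : A) (i j : ℕ) :
    M.mul (M.pw x i) (M.pw x j)
      = (((i + j + 1).choose (j + 1) : ℕ) : ℂ) • M.pw x (i + j + 1) := by
  suffices H : ∀ s i j, i + j = s → M.mul (M.pw x i) (M.pw x j)
      = (((i + j + 1).choose (j + 1) : ℕ) : ℂ) • M.pw x (i + j + 1) from H (i+j) i j rfl
  intro s
  induction s using Nat.strong_induction_on with
  | _ s ih =>
    intro i j hij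
    match i with
    | 0 =>
      simp [pw, Nat.choose_self]
    | i + 1 =>
      have h1 := ih (i + j) (by omega) i j rfl
      have h2 := ih (i + j) (by omega) j i (by omega)
      rw [show j + i = i + j from Nat.add_comm j i] at h2
      have hmul : M.mul (M.pw x (i+1)) (M.pw x j)
          = M.mul x (M.mul (M.pw x i) (M.pw x j)) + M.mul x (M.mul (M.pw x j) (M.pw x i)) := by
        show M.mul (M.mul x (M.pw x i)) (M.pw x j) = _
        rw [M.zinbiel]
      rw [hmul, h1, h2, map_smul, map_smul]
      have hpw : M.mul x (M.pw x (i + j + 1)) = M.pw x (i + j + 2) := rfl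
      rw [hpw, ← add_smul]
      rw [show i + 1 + j + 1 = i + j + 2 by omega]
      congr 1
      rw [← Nat.cast_add]
      congr 1
      have hsymm : (i + j + 1).choose (i + 1) = (i + j + 1).choose j := by
        rw [← Nat.choose_symm (show i + 1 ≤ i + j + 1 by omega)]
        congr 1
        omega
      have key : (i + j + 2).choose (j + 1) = (i + j + 1).choose j + (i + j + 1).choose (j + 1) := by
        rw [show i + j + 2 = (i + j + 1) + 1 by omega]
        exact Nat.choose_succ_succ _ _
      rw [hsymm, key]
      omega

lemma vanish (M : ZinbielStr A) (x : A) :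
    ∀ (d a : ℕ) (c : ℕ → ℂ), c 0 ≠ 0 →
      (∑ i ∈ Finset.range (d + 1), c i • M.pw x (a + i)) = 0 → M.pw x (a + d) = 0 := by
  intro d
  induction d with
  | zero =>
    intro a c hc h
    simp only [zero_add, Finset.sum_range_one, add_zero] at h ⊢
    rcases smul_eq_zero.mp h with h | h
    · exact absurd h hc
    · exact h
  | succ d ih =>
    intro a c hc h
    set T : A →ₗ[ℂ] A := M.mul.flip x - (((a : ℂ) + d + 2) • M.mul x) with hT
    have hTw : ∀ k, T (M.pw x k) = (((k : ℂ) + 1) - ((a : ℂ) + d + 2)) • M.pw x (k + 1) := by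
      intro k
      have h1 : M.mul (M.pw x k) x = (((k + 1 : ℕ)) : ℂ) • M.pw x (k + 1) := by
        have := M.mul_pw x k 0
        simpa [pw, Nat.choose_one_right] using this
      have h2 : M.mul x (M.pw x k) = M.pw x (k + 1) := rfl
      simp only [hT, LinearMap.sub_apply, LinearMap.smul_apply, LinearMap.flip_apply,
        h1, h2, sub_smul, smul_smul]
      push_cast
      ring_nf
    have h0 : ∑ i ∈ Finset.range (d + 2), (c i * ((i : ℂ) - (d + 1))) • M.pw x ((a + 1) + i) = 0 := by
      have := congrArg T h
      rw [map_sum, map_zero] at this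
      rw [← this]
      apply Finset.sum_congr rfl
      intro i _
      rw [map_smul, hTw, smul_smul]
      congr 2
      · push_cast; ring
      · omega
    rw [Finset.sum_range_succ] at h0
    have hlast : (c (d + 1) * (((d + 1 : ℕ) : ℂ) - (d + 1))) • M.pw x ((a + 1) + (d + 1)) = 0 := by
      push_cast
      ring_nf
      simp
    rw [hlast, add_zero] at h0
    have hc' : c 0 * ((0 : ℂ) - (d + 1)) ≠ 0 := by
      apply mul_ne_zero hc
      intro hh
      apply Nat.cast_add_one_ne_zero (R := ℂ) d
      linear_combination -hh
    have := ih (a + 1) (fun i => c i * ((i : ℂ) - (d + 1))) (by simpa using hc') (by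
      simpa using h0)
    rw [show a + (d + 1) = (a + 1) + d by omega]
    exact this

/-- An `n`-dimensional complex Zinbiel algebra is generated by a single element
iff it is isomorphic to `NF_n`. -/
theorem one_generated_iff_NF {A : Type*} [AddCommGroup A] [Module ℂ A]
    [FiniteDimensional ℂ A] (M : ZinbielStr A) (n : ℕ)
    (hdim : Module.finrank ℂ A = n) :
    (∃ x : A, ∀ S : Submodule ℂ A,
        (∀ a ∈ S, ∀ b ∈ S, M.mul a b ∈ S) → x ∈ S → S = ⊤) ↔
    (∃ e : Module.Basis (Fin n) ℂ A, ∀ i j : Fin n,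
      M.mul (e i) (e j) =
        if h : (i : ℕ) + (j : ℕ) + 2 ≤ n then
          (((i : ℕ) + (j : ℕ) + 1).choose ((j : ℕ) + 1) : ℂ) •
            e ⟨(i : ℕ) + (j : ℕ) + 1, by omega⟩
        else 0) := by
  constructor
  · rintro ⟨x, hx⟩
    have hspan : Submodule.span ℂ (Set.range (M.pw x)) = ⊤ := by
      apply hx
      · intro a ha b hb
        induction ha using Submodule.span_induction with
        | mem a' ha' =>
          obtain ⟨i, rfl⟩ := ha'
          induction hb using Submodule.span_induction with
          | mem b' hb' =>
            obtain ⟨j, rfl⟩ := hb'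
            rw [M.mul_pw]
            exact Submodule.smul_mem _ _ (Submodule.subset_span ⟨_, rfl⟩)
          | zero => rw [map_zero]; exact Submodule.zero_mem _
          | add y z hy hz py pz => rw [map_add]; exact Submodule.add_mem _ py pz
          | smul r y hy py => rw [map_smul]; exact Submodule.smul_mem _ _ py
        | zero => rw [map_zero, LinearMap.zero_apply]; exact Submodule.zero_mem _
        | add y z hy hz py pz => rw [map_add, LinearMap.add_apply]; exact Submodule.add_mem _ py pz
        | smul r y hy py => rw [map_smul, LinearMap.smul_apply]; exact Submodule.smul_mem _ _ py
      · exact Submodule.subset_span ⟨0, rfl⟩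
    have hnli : ¬ LinearIndependent ℂ (fun i : Fin (n + 1) => M.pw x i) := by
      intro hli
      have := hli.fintype_card_le_finrank
      rw [hdim, Fintype.card_fin] at this
      omega
    obtain ⟨g, hg, i₀, hi₀⟩ := Fintype.not_linearIndependent_iff.mp hnli
    set G : ℕ → ℂ := fun k => if h : k < n + 1 then g ⟨k, h⟩ else 0 with hG
    have hGsum : ∑ i ∈ Finset.range (n + 1), G i • M.pw x i = 0 := by
      rw [← Fin.sum_univ_eq_sum_range (fun i => G i • M.pw x i) (n + 1)]
      rw [← hg]
      apply Finset.sum_congr rfl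
      intro i _
      simp [hG, i.isLt, Nat.le_of_lt_succ i.isLt]
    have hex : ∃ k, G k ≠ 0 := ⟨i₀, by simp [hG, i₀.isLt, Nat.le_of_lt_succ i₀.isLt]; exact hi₀⟩
    set a := Nat.find hex with haa
    have ha : G a ≠ 0 := Nat.find_spec hex
    have hmin : ∀ k < a, G k = 0 := fun k hk => not_not.mp (Nat.find_min hex hk)
    have han : a < n + 1 := by
      by_contra hcon
      exact ha (dif_neg (by omega))
    have h2 : ∑ i ∈ Finset.Ico a (n + 1), G i • M.pw x i = 0 := by
      rw [← Finset.sum_range_add_sum_Ico (fun i => G i • M.pw x i) (le_of_lt han)] at hGsum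
      rw [Finset.sum_eq_zero (fun k hk => by
        rw [hmin k (Finset.mem_range.mp hk), zero_smul]), zero_add] at hGsum
      exact hGsum
    have h3 : ∑ i ∈ Finset.range ((n - a) + 1), G (a + i) • M.pw x (a + i) = 0 := by
      rw [Finset.sum_Ico_eq_sum_range, show n + 1 - a = (n - a) + 1 by omega] at h2
      exact h2
    have hwn : M.pw x n = 0 := by
      have := M.vanish x (n - a) a (fun i => G (a + i)) (by simpa using ha) h3
      rwa [show a + (n - a) = n by omega] at this
    have hwge : ∀ k, n ≤ k → M.pw x k = 0 := by
      intro k hk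
      induction k, hk using Nat.le_induction with
      | base => exact hwn
      | succ k hk ihk => show M.mul x (M.pw x k) = 0; rw [ihk, map_zero]
    have htop : ⊤ ≤ Submodule.span ℂ (Set.range (fun i : Fin n => M.pw x i)) := by
      rw [← hspan]
      apply Submodule.span_le.mpr
      rintro _ ⟨k, rfl⟩
      by_cases hk : k < n
      · exact Submodule.subset_span ⟨⟨k, hk⟩, rfl⟩
      · rw [hwge k (by omega)]; exact Submodule.zero_mem _
    have hcard : Fintype.card (Fin n) = Module.finrank ℂ A := by simp [hdim]
    refine ⟨basisOfTopLeSpanOfCardEqFinrank _ htop hcard, ?_⟩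
    intro i j
    rw [coe_basisOfTopLeSpanOfCardEqFinrank]
    show M.mul (M.pw x i) (M.pw x j) = _
    rw [M.mul_pw]
    split
    · rfl
    · rw [hwge _ (by omega), smul_zero]
  · rintro ⟨e, he⟩
    rcases Nat.eq_zero_or_pos n with hn | hn
    · subst hn
      have : Subsingleton A := Module.finrank_zero_iff.mp hdim
      refine ⟨0, fun S _ _ => ?_⟩
      ext b
      simp only [Submodule.mem_top, iff_true]
      rw [Subsingleton.elim b (0 : A)]
      exact S.zero_mem
    · refine ⟨e ⟨0, hn⟩, fun S hcl hxS => ?_⟩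
      have hall : ∀ k (hk : k < n), e ⟨k, hk⟩ ∈ S := by
        intro k
        induction k with
        | zero => intro hk; exact hxS
        | succ k ihk =>
          intro hk
          have hk' : k < n := by omega
          have hm := hcl _ hxS _ (ihk hk')
          rw [he ⟨0, hn⟩ ⟨k, hk'⟩] at hm
          rw [dif_pos (show ((⟨0, hn⟩ : Fin n) : ℕ) + ((⟨k, hk'⟩ : Fin n) : ℕ) + 2 ≤ n by
            show 0 + k + 2 ≤ n; omega)] at hm
          simpa [Nat.choose_self] using hm
      rw [eq_top_iff, ← e.span_eq]
      apply Submodule.span_le.mpr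
      rintro _ ⟨i, rfl⟩
      simpa using hall i i.isLt


end ZinbielStr
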